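/- arXiv:2004.10798 — 4 statements merged into one kernel-verified Lean document; each statement's English description precedes it below -/
import Mathlib

section
/- Let (Ω, ℱ, P) be a probability space and let (V_ℓ)_{ℓ ∈ ℕ} be a sequence of independent real-valued random variables with 0 ≤ V_ℓ ≤ 1 almost surely and ∑_{ℓ=0}^∞ E[V_ℓ] = ∞. Then the residual products R_n = ∏_{l < n} (1 − V_l) converge to 0 almost surely as n → ∞. Consequently, the stick-breaking weights π_ℓ = V_ℓ ∏_{l < ℓ} (1 − V_l) satisfy ∑_{ℓ=0}^∞ π_ℓ = 1 almost surely. -/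
open MeasureTheory Filter Finset

/-- Telescoping identity for stick-breaking partial sums. -/
lemma stick_breaking_partial_sum (V : ℕ → ℝ) (n : ℕ) :
    ∑ ℓ ∈ Finset.range n, V ℓ * ∏ l ∈ Finset.range ℓ, (1 - V l)
      = 1 - ∏ l ∈ Finset.range n, (1 - V l) := by
  induction n with
  | zero => simp
  | succ n ih =>
    rw [Finset.sum_range_succ, Finset.prod_range_succ, ih]
    ring

/-- For independent `[0,1]`-valued stick proportions with divergent sum of
expectations, the residual products `∏_{l<n} (1 − V l)` tend to `0` almost
surely, and hence the stick-breaking weights `π ℓ = V ℓ ∏_{l<ℓ} (1 − V l)`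
sum to one almost surely. -/
theorem stick_breaking_total_mass_one
    {Ω : Type*} [MeasurableSpace Ω] (P : Measure Ω) [IsProbabilityMeasure P]
    (V : ℕ → Ω → ℝ)
    (hmeas : ∀ ℓ, Measurable (V ℓ))
    (hindep : ProbabilityTheory.iIndepFun V P)
    (h01 : ∀ ℓ, ∀ᵐ ω ∂P, 0 ≤ V ℓ ω ∧ V ℓ ω ≤ 1)
    (hdiv : ¬ Summable (fun ℓ => ∫ ω, V ℓ ω ∂P)) :
    (∀ᵐ ω ∂P,
        Tendsto (fun n => ∏ l ∈ Finset.range n, (1 - V l ω)) atTop (nhds 0))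
      ∧ (∀ᵐ ω ∂P,
          ∑' ℓ, V ℓ ω * ∏ l ∈ Finset.range ℓ, (1 - V l ω) = 1) := by
  classical
  -- the a.s. set where all coordinates are in [0,1]
  have hS : ∀ᵐ ω ∂P, ∀ ℓ, 0 ≤ V ℓ ω ∧ V ℓ ω ≤ 1 := ae_all_iff.mpr h01
  set W : ℕ → Ω → ℝ := fun l ω => 1 - V l ω with hW
  have hWmeas : ∀ l, Measurable (W l) := fun l => measurable_const.sub (hmeas l)
  have hWindep : ProbabilityTheory.iIndepFun W P :=
    hindep.comp (fun _ x => 1 - x) (fun _ => measurable_const.sub measurable_id)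
  -- integrability of each V ℓ
  have hVint : ∀ ℓ, Integrable (V ℓ) P := by
    intro ℓ
    refine Integrable.mono' (integrable_const 1) (hmeas ℓ).aestronglyMeasurable ?_
    filter_upwards [h01 ℓ] with ω hω
    rw [Real.norm_eq_abs, abs_le]
    exact ⟨by linarith [hω.1], hω.2⟩
  set e : ℕ → ℝ := fun ℓ => ∫ ω, V ℓ ω ∂P with he
  have he0 : ∀ ℓ, 0 ≤ e ℓ := fun ℓ =>
    integral_nonneg_of_ae ((h01 ℓ).mono fun ω hω => hω.1)
  have he1 : ∀ ℓ, e ℓ ≤ 1 := by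
    intro ℓ
    calc e ℓ ≤ ∫ _, (1 : ℝ) ∂P :=
          integral_mono_ae (hVint ℓ) (integrable_const 1)
            ((h01 ℓ).mono fun ω hω => hω.2)
      _ = 1 := by simp
  -- the residual product process and its expectation
  set f : ℕ → Ω → ℝ := fun n ω => ∏ l ∈ Finset.range n, (1 - V l ω) with hf
  have hfmeas : ∀ n, Measurable (f n) := by
    intro n
    exact Finset.measurable_prod _ fun l _ => measurable_const.sub (hmeas l)
  have hfbd : ∀ n, ∀ᵐ ω ∂P, 0 ≤ f n ω ∧ f n ω ≤ 1 := by
    intro n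
    filter_upwards [hS] with ω hω
    constructor
    · exact Finset.prod_nonneg fun l _ => by linarith [(hω l).2]
    · exact Finset.prod_le_one (fun l _ => by linarith [(hω l).2])
        (fun l _ => by linarith [(hω l).1])
  have hfint : ∀ n, Integrable (f n) P := by
    intro n
    refine Integrable.mono' (integrable_const 1) (hfmeas n).aestronglyMeasurable ?_
    filter_upwards [hfbd n] with ω hω
    rw [Real.norm_eq_abs, abs_le]
    exact ⟨by linarith [hω.1], hω.2⟩
  have hWint : ∀ l, Integrable (W l) P := fun l => (integrable_const 1).sub (hVint l)
  -- expectation of residual product is product of expectations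
  have hkey : ∀ n, ∫ ω, f n ω ∂P = ∏ l ∈ Finset.range n, (1 - e l) := by
    intro n
    induction n with
    | zero => simp [hf]
    | succ n ih =>
      have hfeq : f (n + 1) = fun ω => f n ω * W n ω := by
        funext ω
        simp [hf, Finset.prod_range_succ, hW]
      have hindepn : ProbabilityTheory.IndepFun (∏ j ∈ Finset.range n, W j) (W n) P :=
        hWindep.indepFun_prod_range_succ hWmeas n
      have hprodeq : (∏ j ∈ Finset.range n, W j) = f n := by
        funext ω
        simp [hf, hW]
      rw [hprodeq] at hindepn
      have := hindepn.integral_fun_mul_eq_mul_integral (hfmeas n).aestronglyMeasurable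
        (hWmeas n).aestronglyMeasurable
      rw [hfeq]
      have hWn : ∫ ω, W n ω ∂P = 1 - e n := by
        simp only [hW]
        rw [integral_sub (integrable_const 1) (hVint n)]
        simp [he]
      calc ∫ ω, f n ω * W n ω ∂P = (∫ ω, f n ω ∂P) * ∫ ω, W n ω ∂P := this
        _ = (∏ l ∈ Finset.range n, (1 - e l)) * (1 - e n) := by rw [ih, hWn]
        _ = ∏ l ∈ Finset.range (n + 1), (1 - e l) := (Finset.prod_range_succ _ n).symm
  -- the deterministic product tends to 0
  have hsum : Tendsto (fun n => ∑ l ∈ Finset.range n, e l) atTop atTop :=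
    (not_summable_iff_tendsto_nat_atTop_of_nonneg he0).mp hdiv
  have hprod0 : Tendsto (fun n => ∏ l ∈ Finset.range n, (1 - e l)) atTop (nhds 0) := by
    have hub : ∀ n, ∏ l ∈ Finset.range n, (1 - e l)
        ≤ Real.exp (-∑ l ∈ Finset.range n, e l) := by
      intro n
      rw [← Finset.sum_neg_distrib, Real.exp_sum]
      refine Finset.prod_le_prod (fun l _ => by linarith [he1 l]) fun l _ => ?_
      have := Real.add_one_le_exp (-e l)
      linarith
    have hlb : ∀ n, (0 : ℝ) ≤ ∏ l ∈ Finset.range n, (1 - e l) :=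
      fun n => Finset.prod_nonneg fun l _ => by linarith [he1 l]
    have hexp : Tendsto (fun n => Real.exp (-∑ l ∈ Finset.range n, e l)) atTop (nhds 0) :=
      Real.tendsto_exp_atBot.comp (tendsto_neg_atTop_atBot.comp hsum)
    exact tendsto_of_tendsto_of_tendsto_of_le_of_le tendsto_const_nhds hexp hlb hub
  -- the a.s. pointwise limit g
  set g : Ω → ℝ := fun ω => ⨅ n, f n ω with hg
  have hgmeas : Measurable g := Measurable.iInf hfmeas
  have htend_g : ∀ᵐ ω ∂P, Tendsto (fun n => f n ω) atTop (nhds (g ω)) := by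
    filter_upwards [hS] with ω hω
    have hanti : Antitone fun n => f n ω := by
      refine antitone_nat_of_succ_le fun n => ?_
      have h1 : f (n + 1) ω = f n ω * (1 - V n ω) := by
        simp [hf, Finset.prod_range_succ]
      have h2 : 0 ≤ f n ω := Finset.prod_nonneg fun l _ => by linarith [(hω l).2]
      have h3 : 1 - V n ω ≤ 1 := by linarith [(hω n).1]
      calc f (n + 1) ω = f n ω * (1 - V n ω) := h1
        _ ≤ f n ω * 1 := mul_le_mul_of_nonneg_left h3 h2
        _ = f n ω := mul_one _
    have hbdd : BddBelow (Set.range fun n => f n ω) := by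
      refine ⟨0, fun x hx => ?_⟩
      obtain ⟨n, rfl⟩ := hx
      exact Finset.prod_nonneg fun l _ => by linarith [(hω l).2]
    exact tendsto_atTop_ciInf hanti hbdd
  -- dominated convergence: ∫ g = lim ∫ f n = 0
  have hint_tend : Tendsto (fun n => ∫ ω, f n ω ∂P) atTop (nhds (∫ ω, g ω ∂P)) := by
    refine tendsto_integral_of_dominated_convergence (fun _ => (1 : ℝ))
      (fun n => (hfmeas n).aestronglyMeasurable) (integrable_const 1) ?_ htend_g
    intro n
    filter_upwards [hfbd n] with ω hω
    rw [Real.norm_eq_abs, abs_le]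
    exact ⟨by linarith [hω.1], hω.2⟩
  have hint_g : ∫ ω, g ω ∂P = 0 := by
    have : Tendsto (fun n => ∫ ω, f n ω ∂P) atTop (nhds 0) := by
      simpa only [hkey] using hprod0
    exact tendsto_nhds_unique hint_tend this
  have hg_nonneg : 0 ≤ᵐ[P] g := by
    filter_upwards [hS] with ω hω
    exact le_ciInf fun n => Finset.prod_nonneg fun l _ => by linarith [(hω l).2]
  have hg_int : Integrable g P := by
    refine Integrable.mono' (integrable_const 1) hgmeas.aestronglyMeasurable ?_
    filter_upwards [hS, hg_nonneg] with ω hω hω0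
    simp only [Pi.zero_apply] at hω0
    rw [Real.norm_eq_abs, abs_le]
    refine ⟨by linarith, ?_⟩
    calc g ω ≤ f 0 ω := ciInf_le ⟨0, fun x hx => by
          obtain ⟨n, rfl⟩ := hx
          exact Finset.prod_nonneg fun l _ => by linarith [(hω l).2]⟩ 0
      _ = 1 := by simp [hf]
  have hg_zero : g =ᵐ[P] 0 :=
    (integral_eq_zero_iff_of_nonneg_ae hg_nonneg hg_int).mp hint_g
  -- first conclusion
  have hfirst : ∀ᵐ ω ∂P,
      Tendsto (fun n => ∏ l ∈ Finset.range n, (1 - V l ω)) atTop (nhds 0) := by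
    filter_upwards [htend_g, hg_zero] with ω h1 h2
    rw [h2] at h1
    exact h1
  refine ⟨hfirst, ?_⟩
  -- second conclusion via telescoping
  filter_upwards [hfirst, hS] with ω h1 hω
  have hpartial : ∀ n, ∑ ℓ ∈ Finset.range n, V ℓ ω * ∏ l ∈ Finset.range ℓ, (1 - V l ω)
      = 1 - ∏ l ∈ Finset.range n, (1 - V l ω) :=
    fun n => stick_breaking_partial_sum (fun l => V l ω) n
  have htendsum : Tendsto
      (fun n => ∑ ℓ ∈ Finset.range n, V ℓ ω * ∏ l ∈ Finset.range ℓ, (1 - V l ω))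
      atTop (nhds 1) := by
    simp only [hpartial]
    have := (tendsto_const_nhds (x := (1 : ℝ)) (f := atTop)).sub h1
    simpa using this
  have hnonneg : ∀ ℓ, 0 ≤ V ℓ ω * ∏ l ∈ Finset.range ℓ, (1 - V l ω) :=
    fun ℓ => mul_nonneg (hω ℓ).1 (Finset.prod_nonneg fun l _ => by linarith [(hω l).2])
  have : HasSum (fun ℓ => V ℓ ω * ∏ l ∈ Finset.range ℓ, (1 - V l ω)) 1 :=
    (hasSum_iff_tendsto_nat_of_nonneg hnonneg 1).mpr htendsum
  exact this.tsum_eq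
end

section
/- Let α > 0 and d ∈ (0,1) be real numbers. Define the sequence (a_n)_{n ≥ 1} of real numbers by a_1 = 1 and a_{n+1} = a_n + (α + d·a_n)/(α + n). Then for every n ≥ 1, a_n = (Γ(α + d + n) · Γ(α + 1)) / (d · Γ(α + n) · Γ(α + d)) − α/d, where Γ denotes the Gamma function. -/
open Finset

/-- Closed form for the expected number of clusters of the Pitman–Yor
process: the solution of the recursion `a₁ = 1`,
`a_{n+1} = a_n + (α + d a_n)/(α + n)` is
`a_n = Γ(α+d+n) Γ(α+1) / (d Γ(α+n) Γ(α+d)) − α/d`. -/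
theorem pitman_yor_expected_clusters_closed_form
    (α d : ℝ) (hα : 0 < α) (hd0 : 0 < d) (hd1 : d < 1)
    (a : ℕ → ℝ) (ha1 : a 1 = 1)
    (harec : ∀ n : ℕ, 1 ≤ n → a (n + 1) = a n + (α + d * a n) / (α + n)) :
    ∀ n : ℕ, 1 ≤ n →
      a n = Real.Gamma (α + d + n) * Real.Gamma (α + 1)
              / (d * Real.Gamma (α + n) * Real.Gamma (α + d)) - α / d := by
  have hΓ1 : Real.Gamma (α + 1) ≠ 0 := (Real.Gamma_pos_of_pos (by linarith)).ne'
  have hΓd : Real.Gamma (α + d) ≠ 0 := (Real.Gamma_pos_of_pos (by linarith)).ne'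
  intro n hn
  induction n with
  | zero => omega
  | succ m ih =>
    rcases Nat.lt_or_ge m 1 with h | hm
    · obtain rfl : m = 0 := by omega
      have h1 : α + d + (1:ℕ) = (α + d) + 1 := by push_cast; ring
      have h2 : α + (1:ℕ) = α + 1 := by push_cast; ring
      rw [ha1, h1, h2, Real.Gamma_add_one (by positivity)]
      field_simp
      ring
    · have key := ih hm
      have hαn : (0:ℝ) < α + m := by positivity
      have hΓn : Real.Gamma (α + m) ≠ 0 := (Real.Gamma_pos_of_pos hαn).ne'
      have h1 : α + d + ((m:ℝ) + 1) = (α + d + m) + 1 := by ring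
      have h2 : α + ((m:ℝ) + 1) = (α + m) + 1 := by ring
      rw [harec m hm, key]
      push_cast
      rw [h1, h2, Real.Gamma_add_one (by positivity : α + d + (m:ℝ) ≠ 0),
        Real.Gamma_add_one hαn.ne']
      set G := Real.Gamma (α + d + (m:ℝ))
      set H := Real.Gamma (α + (m:ℝ))
      set A := Real.Gamma (α + 1)
      set D := Real.Gamma (α + d)
      field_simp
      ring
end

section
/- Let α > 0 and d ∈ (0,1) be real numbers. Define the sequence (a_n)_{n ≥ 1} of real numbers by a_1 = 1 and a_{n+1} = a_n + (α + d·a_n)/(α + n). Then a_n / n^d → Γ(α + 1) / (d · Γ(α + d)) as n → ∞, where Γ denotes the Gamma function; in particular the expected number of clusters of the Pitman–Yor model follows a power law of order n^d in the number n of objects. -/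
open Finset Filter

/-- Power-law growth of the expected number of clusters of the Pitman–Yor
process: if `a₁ = 1` and `a_{n+1} = a_n + (α + d a_n)/(α + n)`, then
`a_n / n^d → Γ(α+1)/(d Γ(α+d))` as `n → ∞`. -/
theorem pitman_yor_expected_clusters_power_law
    (α d : ℝ) (hα : 0 < α) (hd0 : 0 < d) (hd1 : d < 1)
    (a : ℕ → ℝ) (ha1 : a 1 = 1)
    (harec : ∀ n : ℕ, 1 ≤ n → a (n + 1) = a n + (α + d * a n) / (α + n)) :
    Tendsto (fun n : ℕ => a n / (n : ℝ) ^ d) atTop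
      (nhds (Real.Gamma (α + 1) / (d * Real.Gamma (α + d)))) := by
  have hd : d ≠ 0 := ne_of_gt hd0
  have hαd : (0:ℝ) < α + d := by positivity
  have hΓβ : (0:ℝ) < Real.Gamma (α + d) := Real.Gamma_pos_of_pos hαd
  have hΓα : (0:ℝ) < Real.Gamma α := Real.Gamma_pos_of_pos hα
  -- closed form for the recursion
  have hclosed : ∀ m : ℕ, a (m + 1) + α / d =
      (1 + α / d) * ∏ k ∈ Finset.range m, ((α + d + ((k : ℝ) + 1)) / (α + ((k : ℝ) + 1))) := by
    intro m
    induction m with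
    | zero => simp [ha1]
    | succ m ih =>
      have hpos : (0:ℝ) < α + ((m : ℝ) + 1) := by positivity
      have h1 : a (m + 1 + 1) = a (m + 1) + (α + d * a (m + 1)) / (α + ((m : ℝ) + 1)) := by
        have := harec (m + 1) (by omega)
        push_cast at this
        linarith [this]
      rw [Finset.prod_range_succ, ← mul_assoc, ← ih, h1]
      field_simp
      ring
  -- auxiliary positivity facts for the products
  have hPα : ∀ m : ℕ, (0:ℝ) < ∏ j ∈ Finset.range (m + 1), (α + (j : ℝ)) := by
    intro m; exact Finset.prod_pos fun j _ => by positivity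
  have hPβ : ∀ m : ℕ, (0:ℝ) < ∏ j ∈ Finset.range (m + 1), (α + d + (j : ℝ)) := by
    intro m; exact Finset.prod_pos fun j _ => by positivity
  -- the product in terms of Gamma sequences
  have hprod : ∀ m : ℕ, 1 ≤ m →
      ∏ k ∈ Finset.range m, ((α + d + ((k : ℝ) + 1)) / (α + ((k : ℝ) + 1))) =
        (α / (α + d)) * ((m : ℝ) ^ d * (Real.GammaSeq α m / Real.GammaSeq (α + d) m)) := by
    intro m hm
    have hm0 : (0:ℝ) < m := by exact_mod_cast hm
    have hfact : ((m.factorial : ℝ)) ≠ 0 := by positivity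
    have hmα : (0:ℝ) < (m : ℝ) ^ α := Real.rpow_pos_of_pos hm0 _
    have hmd : (0:ℝ) < (m : ℝ) ^ d := Real.rpow_pos_of_pos hm0 _
    have key : (m : ℝ) ^ d * (Real.GammaSeq α m / Real.GammaSeq (α + d) m) =
        (∏ j ∈ Finset.range (m + 1), (α + d + (j : ℝ))) /
          (∏ j ∈ Finset.range (m + 1), (α + (j : ℝ))) := by
      unfold Real.GammaSeq
      rw [Real.rpow_add hm0]
      have h1 := (hPα m).ne'
      have h2 := (hPβ m).ne'
      field_simp
    rw [key]
    have e1 : ∏ j ∈ Finset.range (m + 1), (α + d + (j : ℝ)) =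
        (α + d) * ∏ k ∈ Finset.range m, (α + d + ((k : ℝ) + 1)) := by
      rw [Finset.prod_range_succ']
      push_cast
      ring
    have e2 : ∏ j ∈ Finset.range (m + 1), (α + (j : ℝ)) =
        α * ∏ k ∈ Finset.range m, (α + ((k : ℝ) + 1)) := by
      rw [Finset.prod_range_succ']
      push_cast
      ring
    rw [Finset.prod_div_distrib, e1, e2]
    have h3 : (∏ k ∈ Finset.range m, (α + ((k : ℝ) + 1))) ≠ 0 := by
      exact (Finset.prod_pos fun k _ => by positivity).ne'
    field_simp
  -- target limit value
  set C : ℝ := (1 + α / d) * (α / (α + d)) with hC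
  set L : ℝ := Real.Gamma (α + 1) / (d * Real.Gamma (α + d)) with hL
  -- the comparison sequence
  set g : ℕ → ℝ := fun m => C * (((m : ℝ) / ((m : ℝ) + 1)) ^ d *
      (Real.GammaSeq α m / Real.GammaSeq (α + d) m)) - (α / d) / (((m : ℝ) + 1)) ^ d with hg
  have hglim : Tendsto g atTop (nhds L) := by
    have t1 : Tendsto (fun m : ℕ => ((m : ℝ) / ((m : ℝ) + 1)) ^ d) atTop (nhds 1) := by
      have h := (tendsto_natCast_div_add_atTop (1 : ℝ)).rpow_const (p := d) (Or.inr hd0.le)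
      simpa using h
    have t2 : Tendsto (fun m : ℕ => Real.GammaSeq α m / Real.GammaSeq (α + d) m) atTop
        (nhds (Real.Gamma α / Real.Gamma (α + d))) :=
      (Real.GammaSeq_tendsto_Gamma α).div (Real.GammaSeq_tendsto_Gamma (α + d)) hΓβ.ne'
    have t3 : Tendsto (fun m : ℕ => (α / d) / (((m : ℝ) + 1)) ^ d) atTop (nhds 0) := by
      apply Tendsto.div_atTop tendsto_const_nhds
      exact (tendsto_rpow_atTop hd0).comp
        (tendsto_atTop_add_const_right atTop 1 tendsto_natCast_atTop_atTop)
    have := ((tendsto_const_nhds (x := C)).mul (t1.mul t2)).sub t3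
    convert this using 2
    rw [hL, hC, Real.Gamma_add_one hα.ne']
    field_simp
    ring
  rw [← Filter.tendsto_add_atTop_iff_nat 1]
  apply hglim.congr'
  filter_upwards [eventually_atTop.mpr ⟨1, fun m hm => hm⟩] with m hm
  have hm1 : (0:ℝ) < (m : ℝ) + 1 := by positivity
  have ha : a (m + 1) = C * ((m : ℝ) ^ d * (Real.GammaSeq α m / Real.GammaSeq (α + d) m)) - α / d := by
    have := hclosed m
    rw [hprod m hm] at this
    rw [hC]; linarith [this]
  have hcast : ((m + 1 : ℕ) : ℝ) = (m : ℝ) + 1 := by push_cast; ring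
  rw [hcast] at *
  rw [hg]
  simp only []
  rw [ha, Real.div_rpow (Nat.cast_nonneg m) hm1.le]
  ring
end

section
/- Let α > 0 be a real number, n ≥ 1 a natural number, and let c : {0, 1, …, n−1} → ℕ be a cluster-assignment sequence in canonical order, i.e., c(0) = 0 and for each i ≥ 1, c(i) ≤ 1 + max_{j < i} c(j). For each step i, define the sequential predictive weight w_i = m_i(c(i))/(α + i) if m_i(c(i)) > 0, and w_i = α/(α + i) if m_i(c(i)) = 0, where m_i(r) = |{j < i : c(j) = r}| is the number of earlier objects assigned to cluster label r. Let D be the number of distinct labels used by c and v_1, …, v_D their final occupancy counts. Then ∏_{i=0}^{n−1} w_i = α^D · (∏_{j=1}^D (v_j − 1)!) / α^{[n]}, where α^{[n]} = α(α+1)⋯(α+n−1) is the rising factorial. In particular, the product of sequential predictive probabilities depends on the assignment sequence only through the induced partition block sizes, so the induced random partition is exchangeable with exchangeable partition probability function p(v_1, …, v_D) = α^D (∏_j (v_j − 1)!)/α^{[n]}. -/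
open Finset

/-- `crpCount c i r` is the number of the first `i` objects assigned to
cluster label `r` by the assignment sequence `c`. -/
def crpCount (c : ℕ → ℕ) (i r : ℕ) : ℕ :=
  ((Finset.range i).filter (fun j => c j = r)).card

/-- `crpWeight α c i` is the sequential predictive weight of the Chinese
restaurant process: `m/(α+i)` if the chosen cluster already contains `m > 0`
of the first `i` objects, and `α/(α+i)` if it is new. -/
noncomputable def crpWeight (α : ℝ) (c : ℕ → ℕ) (i : ℕ) : ℝ :=
  if 0 < crpCount c i (c i) then (crpCount c i (c i) : ℝ) / (α + i)
  else α / (α + i)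

lemma crpCount_succ (c : ℕ → ℕ) (n r : ℕ) :
    crpCount c (n+1) r = crpCount c n r + if c n = r then 1 else 0 := by
  unfold crpCount
  rw [Finset.range_add_one, Finset.filter_insert]
  split
  · rw [Finset.card_insert_of_notMem (by simp)]
  · simp

lemma crpCount_pos_iff (c : ℕ → ℕ) (n r : ℕ) :
    0 < crpCount c n r ↔ r ∈ (Finset.range n).image c := by
  unfold crpCount
  rw [Finset.card_pos, Finset.filter_nonempty_iff]
  simp [eq_comm]

lemma crp_num_prod (α : ℝ) (c : ℕ → ℕ) (n : ℕ) :
    ∏ i ∈ Finset.range n,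
        (if 0 < crpCount c i (c i) then (crpCount c i (c i) : ℝ) else α)
      = α ^ ((Finset.range n).image c).card
          * ∏ r ∈ (Finset.range n).image c, ((crpCount c n r - 1).factorial : ℝ) := by
  induction n with
  | zero => simp
  | succ n ih =>
    have himg : (Finset.range (n+1)).image c = insert (c n) ((Finset.range n).image c) := by
      rw [Finset.range_add_one, Finset.image_insert]
    rw [Finset.prod_range_succ, ih]
    by_cases h : 0 < crpCount c n (c n)
    · -- existing cluster
      have hmem : c n ∈ (Finset.range n).image c := (crpCount_pos_iff c n (c n)).mp h
      rw [himg, Finset.insert_eq_self.mpr hmem, if_pos h]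
      rw [← Finset.mul_prod_erase _ _ hmem, ← Finset.mul_prod_erase _ (fun r => ((crpCount c (n+1) r - 1).factorial : ℝ)) hmem]
      have hcnt : crpCount c (n+1) (c n) = crpCount c n (c n) + 1 := by
        rw [crpCount_succ]; simp
      have hrest : ∀ r ∈ ((Finset.range n).image c).erase (c n),
          ((crpCount c (n+1) r - 1).factorial : ℝ) = ((crpCount c n r - 1).factorial : ℝ) := by
        intro r hr
        have : c n ≠ r := fun e => (Finset.mem_erase.mp hr).1 e.symm
        rw [crpCount_succ, if_neg this, Nat.add_zero]
      rw [Finset.prod_congr rfl hrest, hcnt]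
      have hfac : ((crpCount c n (c n) + 1 - 1).factorial : ℝ)
          = (crpCount c n (c n) : ℝ) * ((crpCount c n (c n) - 1).factorial : ℝ) := by
        obtain ⟨m, hm⟩ : ∃ m, crpCount c n (c n) = m + 1 :=
          ⟨crpCount c n (c n) - 1, (Nat.succ_pred_eq_of_pos h).symm⟩
        rw [hm]
        push_cast [Nat.factorial_succ]
        ring_nf
      rw [hfac]; ring
    · -- new cluster
      have hnot : c n ∉ (Finset.range n).image c := fun hm => h ((crpCount_pos_iff c n (c n)).mpr hm)
      rw [himg, if_neg h, Finset.card_insert_of_notMem hnot, Finset.prod_insert hnot]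
      have h0 : crpCount c n (c n) = 0 := Nat.eq_zero_of_not_pos h
      have hcnt : crpCount c (n+1) (c n) = 1 := by rw [crpCount_succ, h0]; simp
      have hrest : ∀ r ∈ (Finset.range n).image c,
          ((crpCount c (n+1) r - 1).factorial : ℝ) = ((crpCount c n r - 1).factorial : ℝ) := by
        intro r hr
        have : c n ≠ r := fun e => hnot (e ▸ hr)
        rw [crpCount_succ, if_neg this, Nat.add_zero]
      rw [Finset.prod_congr rfl hrest, hcnt]
      simp [pow_succ]; ring

/-- The product of sequential CRP predictive probabilities equals the
Dirichlet-process EPPF `α^D ∏_r (v_r − 1)! / α⁽ⁿ⁾`, where `D` is the number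
of distinct labels used and the `v_r` are the final occupancy counts; in
particular it depends on the assignment sequence only through the induced
block sizes, so the induced random partition is exchangeable. -/
theorem crp_product_eq_eppf
    (α : ℝ) (hα : 0 < α) (n : ℕ) (hn : 1 ≤ n) (c : ℕ → ℕ)
    (hc0 : c 0 = 0)
    (hcanon : ∀ i, 1 ≤ i → i < n → c i ≤ 1 + (Finset.range i).sup c) :
    ∏ i ∈ Finset.range n, crpWeight α c i
      = α ^ ((Finset.range n).image c).card
          * (∏ r ∈ (Finset.range n).image c, ((crpCount c n r - 1).factorial : ℝ))
          / ∏ i ∈ Finset.range n, (α + i) := by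
  have hw : ∀ i, crpWeight α c i
      = (if 0 < crpCount c i (c i) then (crpCount c i (c i) : ℝ) else α) / (α + i) := by
    intro i; unfold crpWeight; split <;> rfl
  calc ∏ i ∈ Finset.range n, crpWeight α c i
      = (∏ i ∈ Finset.range n,
          (if 0 < crpCount c i (c i) then (crpCount c i (c i) : ℝ) else α))
          / ∏ i ∈ Finset.range n, (α + i) := by
        rw [← Finset.prod_div_distrib]; exact Finset.prod_congr rfl fun i _ => hw i
    _ = _ := by rw [crp_num_prod]
end
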